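/- If p ∈ ℝⁿ is a nonzero vector with pᵀ A_{ij} = pᵀ for every edge (v_i,v_j) of a connected graph G, then for any walk w in the bidirectionalized digraph of G from node v_ℓ to node v_k, p_k = R_w · p_ℓ, where R_w is the product of the ratios r_{ij} = a_{ij}/a_{ji} along the walk. -/
import Mathlib


open Matrix Finset

/-- The local stochastic matrix `A_{ij}`: identity except for the 2×2 principal
submatrix on rows/columns `i,j`, which is `[[1-a_{ij}, a_{ij}],[a_{ji}, 1-a_{ji}]]`. -/
def locMat {n : ℕ} (a : Fin n → Fin n → ℝ) (i j : Fin n) : Matrix (Fin n) (Fin n) ℝ :=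
  Matrix.of fun k l =>
    if k = i then (if l = i then 1 - a i j else if l = j then a i j else 0)
    else if k = j then (if l = i then a j i else if l = j then 1 - a j i else 0)
    else if k = l then 1 else 0

/-- `R_w`: the product of the ratios `r` along the (directed) edges of a walk `w`. -/
def Rwalk {n : ℕ} (r : Fin n → Fin n → ℝ) {G : SimpleGraph (Fin n)} {u v : Fin n}
    (w : G.Walk u v) : ℝ :=
  (w.darts.map fun d => r d.toProd.1 d.toProd.2).prod

/-- The local stochastic matrices (given by the weights `a`) are holonomic for `G`:
`R_C = 1` for every cycle `C` of length greater than 2. -/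
def Holonomic {n : ℕ} (G : SimpleGraph (Fin n)) (a : Fin n → Fin n → ℝ) : Prop :=
  ∀ (u : Fin n) (c : G.Walk u u), c.IsCycle → 2 < c.length →
    Rwalk (fun i j => a i j / a j i) c = 1

lemma step_pj {n : ℕ} {G : SimpleGraph (Fin n)}
    (a : Fin n → Fin n → ℝ) (ha : ∀ i j, G.Adj i j → a i j ∈ Set.Ioo (0:ℝ) 1)
    (p : Fin n → ℝ)
    (hinv : ∀ i j, G.Adj i j → Matrix.vecMul p (locMat a i j) = p)
    {i j : Fin n} (hij : G.Adj i j) : p j = (a i j / a j i) * p i := by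
  have hne : i ≠ j := hij.ne
  have hji : a j i ≠ 0 := ne_of_gt (ha j i hij.symm).1
  have h := congrFun (hinv i j hij) j
  rw [Matrix.vecMul] at h
  simp only [dotProduct] at h
  rw [Finset.sum_eq_add_of_mem i j (Finset.mem_univ i) (Finset.mem_univ j) hne
    (by intro k _ hk; simp [locMat, hk.1, hk.2])] at h
  simp [locMat, hne, hne.symm] at h
  rw [div_mul_eq_mul_div, eq_div_iff hji]
  linarith [h]

/-- If `p ≠ 0` satisfies `pᵀ A_{ij} = pᵀ` for every edge of the connected graph `G`,
then for any walk `w` from `u` to `v`, `p v = R_w · p u`. -/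
theorem stmt1 {n : ℕ} (G : SimpleGraph (Fin n)) (hGc : G.Connected)
    (a : Fin n → Fin n → ℝ) (ha : ∀ i j, G.Adj i j → a i j ∈ Set.Ioo (0:ℝ) 1)
    (p : Fin n → ℝ) (hp : p ≠ 0)
    (hinv : ∀ i j, G.Adj i j → Matrix.vecMul p (locMat a i j) = p)
    {u v : Fin n} (w : G.Walk u v) :
    p v = Rwalk (fun i j => a i j / a j i) w * p u := by
  induction w with
  | nil => simp [Rwalk]
  | cons h w ih =>
    simp only [Rwalk, SimpleGraph.Walk.darts_cons, List.map_cons, List.prod_cons] at *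
    rw [ih, step_pj a ha p hinv h]; ring
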